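/- Let L be a closed subspace of a Hilbert space E = F ⊕ ℂ (orthogonal direct sum with a one-dimensional summand spanned by a unit vector e). Write the orthogonal projection [L] onto L in block form [[a,b],[c,d]] with respect to this decomposition, and assume d ≠ 1. Then the orthogonal projection of E onto the closure of the image of L under the orthogonal projection onto F, restricted to F, equals a + b(1−d)⁻¹c. -/

import Mathlib

open scoped ComplexInnerProductSpace

/-- Block formula for the projection onto the image of `L` under the projection onto `F`,
where `E = F ⊕ ℂe`, `F = (ℂe)ᗮ`.  `P` is the orthogonal projection onto `L`, `Q` the
orthogonal projection onto `(L + ℂe) ∩ F`, and `d = ⟪e, P e⟫ ≠ 1`. -/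
theorem stmt5 {E : Type*} [NormedAddCommGroup E] [InnerProductSpace ℂ E] [CompleteSpace E]
    (e : E) (he : ‖e‖ = 1) (P Q : E →L[ℂ] E)
    (hP : IsSelfAdjoint P) (hPi : P ∘L P = P)
    (hQ : IsSelfAdjoint Q) (hQi : Q ∘L Q = Q)
    (hQrange : LinearMap.range (Q : E →ₗ[ℂ] E) = (LinearMap.range (P : E →ₗ[ℂ] E) ⊔ (ℂ ∙ e)) ⊓ (ℂ ∙ e)ᗮ)
    (hd : ⟪e, P e⟫ ≠ 1) :
    ∀ v : E, ⟪e, v⟫ = 0 →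
      Q v = (P v - ⟪e, P v⟫ • e)
        + ((1 - ⟪e, P e⟫)⁻¹ * ⟪e, P v⟫) • (P e - ⟪e, P e⟫ • e) := by
  intro v hv
  set d : ℂ := ⟪e, P e⟫ with hdd
  set c : ℂ := ⟪e, P v⟫ with hcc
  set α : ℂ := (1 - d)⁻¹ * c with hα
  set u : E := (P v - c • e) + α • (P e - d • e) with hu
  have hee : ⟪e, e⟫ = (1 : ℂ) := by
    rw [inner_self_eq_norm_sq_to_K, he]; norm_num
  have h1d : (1 : ℂ) - d ≠ 0 := sub_ne_zero.mpr (Ne.symm hd)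
  have hkey : c + α * d = α := by
    rw [hα]; field_simp; ring
  have hPsa : ∀ x y : E, ⟪P x, y⟫ = ⟪x, P y⟫ := by
    intro x y
    have h := ContinuousLinearMap.adjoint_inner_left P y x
    rw [ContinuousLinearMap.isSelfAdjoint_iff'.mp hP] at h
    exact h
  have hQsa : ∀ x y : E, ⟪Q x, y⟫ = ⟪x, Q y⟫ := by
    intro x y
    have h := ContinuousLinearMap.adjoint_inner_left Q y x
    rw [ContinuousLinearMap.isSelfAdjoint_iff'.mp hQ] at h
    exact h
  have hPP : ∀ x : E, P (P x) = P x := by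
    intro x
    have := congrArg (fun T : E →L[ℂ] E => T x) hPi
    simpa using this
  have hQQ : ∀ x : E, Q (Q x) = Q x := by
    intro x
    have := congrArg (fun T : E →L[ℂ] E => T x) hQi
    simpa using this
  -- u rewritten
  have h2 : u = (P v + α • P e) + (-(c + α * d)) • e := by
    rw [hu]; module
  -- u ∈ range Q
  have humem : u ∈ LinearMap.range (Q : E →ₗ[ℂ] E) := by
    rw [hQrange]
    refine Submodule.mem_inf.mpr ⟨?_, ?_⟩
    · rw [h2]
      refine Submodule.add_mem_sup ?_ ?_
      · exact add_mem ⟨v, rfl⟩ (Submodule.smul_mem _ _ ⟨e, rfl⟩)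
      · exact Submodule.smul_mem _ _ (Submodule.mem_span_singleton_self e)
    · rw [Submodule.mem_orthogonal_singleton_iff_inner_right, hu]
      simp only [inner_add_right, inner_sub_right, inner_smul_right, hee]
      rw [← hcc, ← hdd]; ring
  -- v - u decomposition
  have hvu : v - u = (v - P v) - α • (P e - e) := by
    rw [h2, hkey]; module
  -- v - u ⊥ range P
  have hvuP : ∀ x : E, ⟪P x, v - u⟫ = 0 := by
    intro x
    rw [hvu, inner_sub_right, inner_smul_right, inner_sub_right, inner_sub_right,
      hPsa x v, hPsa x (P v), hPsa x (P e), hPsa x e, hPP, hPP]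
    ring
  -- v - u ⊥ e
  have hvue : ⟪e, v - u⟫ = 0 := by
    rw [hvu]
    simp only [inner_sub_right, inner_smul_right, hee, hv, ← hcc, ← hdd]
    linear_combination -hkey
  -- v - u ∈ (range Q)ᗮ
  have hvuQ : v - u ∈ (LinearMap.range (Q : E →ₗ[ℂ] E))ᗮ := by
    rw [hQrange]
    refine (Submodule.mem_orthogonal _ _).mpr ?_
    intro w hw
    have hw1 : w ∈ LinearMap.range (P : E →ₗ[ℂ] E) ⊔ (ℂ ∙ e) := (Submodule.mem_inf.mp hw).1
    rw [Submodule.mem_sup] at hw1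
    obtain ⟨p, ⟨x, rfl⟩, z, hz, rfl⟩ := hw1
    rw [Submodule.mem_span_singleton] at hz
    obtain ⟨a, rfl⟩ := hz
    rw [inner_add_left, inner_smul_left, ContinuousLinearMap.coe_coe, hvuP x, hvue]
    ring
  -- Q u = u
  have hQu : Q u = u := by
    obtain ⟨x, hx⟩ := humem
    rw [← hx, ContinuousLinearMap.coe_coe, hQQ]
  -- Q (v - u) = 0
  have hQvu : Q (v - u) = 0 := by
    have h0 : ⟪Q (v - u), Q (v - u)⟫ = 0 := by
      rw [hQsa, hQQ]
      have h1 : ⟪Q (v - u), v - u⟫ = 0 :=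
        (Submodule.mem_orthogonal _ _).mp hvuQ (Q (v - u)) ⟨v - u, rfl⟩
      rw [← inner_conj_symm, h1, map_zero]
    exact inner_self_eq_zero.mp h0
  calc Q v = Q (u + (v - u)) := by rw [add_sub_cancel]
    _ = Q u + Q (v - u) := map_add Q _ _
    _ = u := by rw [hQu, hQvu, add_zero]
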